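/- Let ({x̂_k},{f̂_k}) ∈ 𝒩 be a minimizer of J_y over 𝒩 with minimal value Ĵ = J_y({f̂_k},{x̂_k}) ≤ 1, and let {ℓ_k}_{k=0}^{N+1} ∈ L. Then the support function of the a-posteriori set satisfies sup_{{x_k}∈G_y} ℓ({x_k}) = Σ_{k=0}^{N+1} (ℓ_k, x̂_k) + sup{ ℓ({x_k}) : ({x_k},{f_k}) ∈ 𝒩, J_0({f_k},{x_k}) ≤ 1 − Ĵ }. -/

import Mathlib

open Matrix

/-!  Index conventions.  The state sequence `x_0,…,x_{N+1}` is a function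
`Fin (N+2) → Fin n → ℝ`.  The disturbance sequence `f_{-1},…,f_N` and the
data `B_{-1},…,B_N`, `Q_{-1},…,Q_N` are shifted by one, so `f j`, `B j`,
`Q j` (for `j : Fin (N+2)`) stand for `f_{j-1}`, `B_{j-1}`, `Q_{j-1}`. -/

/-- The constraint set `𝒩` of pairs `({x_k}_{0}^{N+1}, {f_k}_{-1}^{N})` with
`F_{k+1} x_{k+1} - C_k x_k = B_k f_k` (k = 0,…,N) and `F_0 x_0 = B_{-1} f_{-1}`. -/
def NSet {N m n p : ℕ} (F : Fin (N + 2) → Matrix (Fin m) (Fin n) ℝ)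
    (C : Fin (N + 1) → Matrix (Fin m) (Fin n) ℝ)
    (B : Fin (N + 2) → Matrix (Fin m) (Fin p) ℝ) :
    Set ((Fin (N + 2) → Fin n → ℝ) × (Fin (N + 2) → Fin p → ℝ)) :=
  {xf | (∀ k : Fin (N + 1),
      F k.succ *ᵥ xf.1 k.succ - C k *ᵥ xf.1 k.castSucc = B k.succ *ᵥ xf.2 k.succ) ∧
    F 0 *ᵥ xf.1 0 = B 0 *ᵥ xf.2 0}

/-- The functional
`J_y({f},{x}) = Σ_{k=-1}^{N} (Q_k f_k, f_k) + Σ_{k=0}^{N} (R_k(y_k - H_k x_k), y_k - H_k x_k)`. -/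
def Jfun {N n p q : ℕ} (H : Fin (N + 1) → Matrix (Fin q) (Fin n) ℝ)
    (Q : Fin (N + 2) → Matrix (Fin p) (Fin p) ℝ)
    (R : Fin (N + 1) → Matrix (Fin q) (Fin q) ℝ)
    (y : Fin (N + 1) → Fin q → ℝ)
    (f : Fin (N + 2) → Fin p → ℝ) (x : Fin (N + 2) → Fin n → ℝ) : ℝ :=
  (∑ j : Fin (N + 2), (Q j *ᵥ f j) ⬝ᵥ f j) +
    ∑ k : Fin (N + 1),
      (R k *ᵥ (y k - H k *ᵥ x k.castSucc)) ⬝ᵥ (y k - H k *ᵥ x k.castSucc)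

/-- The a-posteriori set `G_y`. -/
def GSet {N m n p q : ℕ} (F : Fin (N + 2) → Matrix (Fin m) (Fin n) ℝ)
    (C : Fin (N + 1) → Matrix (Fin m) (Fin n) ℝ)
    (H : Fin (N + 1) → Matrix (Fin q) (Fin n) ℝ)
    (B : Fin (N + 2) → Matrix (Fin m) (Fin p) ℝ)
    (Q : Fin (N + 2) → Matrix (Fin p) (Fin p) ℝ)
    (R : Fin (N + 1) → Matrix (Fin q) (Fin q) ℝ)
    (y : Fin (N + 1) → Fin q → ℝ) : Set (Fin (N + 2) → Fin n → ℝ) :=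
  {x | ∃ f, (x, f) ∈ NSet F C B ∧ Jfun H Q R y f x ≤ 1}

/-- `ℓ({x_k}) = Σ_{k=0}^{N+1} (ℓ_k, x_k)`. -/
def lfun {N n : ℕ} (l : Fin (N + 2) → Fin n → ℝ) (x : Fin (N + 2) → Fin n → ℝ) : ℝ :=
  ∑ k : Fin (N + 2), l k ⬝ᵥ x k

/-- Membership of the family `{ℓ_k}_{0}^{N+1}` in the set `L`: there are
`z_k ∈ ℝ^m` and `u_k ∈ ℝ^q` with `ℓ_k = F_k' z_k - C_k' z_{k+1} + H_k' u_k`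
(k = 0,…,N) and `F_{N+1}' z_{N+1} = ℓ_{N+1}`. -/
def memL {N m n q : ℕ} (F : Fin (N + 2) → Matrix (Fin m) (Fin n) ℝ)
    (C : Fin (N + 1) → Matrix (Fin m) (Fin n) ℝ)
    (H : Fin (N + 1) → Matrix (Fin q) (Fin n) ℝ)
    (l : Fin (N + 2) → Fin n → ℝ) : Prop :=
  ∃ (z : Fin (N + 2) → Fin m → ℝ) (u : Fin (N + 1) → Fin q → ℝ),
    (∀ k : Fin (N + 1),
      l k.castSucc =
        (F k.castSucc)ᵀ *ᵥ z k.castSucc - (C k)ᵀ *ᵥ z k.succ + (H k)ᵀ *ᵥ u k) ∧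
    (F (Fin.last (N + 1)))ᵀ *ᵥ z (Fin.last (N + 1)) = l (Fin.last (N + 1))

/-- `lhat` is a minimax a-posteriori estimation of the linear function `lf` over `G`:
`sup_{x ∈ G} |lf x - lhat| = inf_{x̃ ∈ G} sup_{x ∈ G} |lf x - lf x̃|`
(suprema and infima taken in the extended reals). -/
def IsMinimaxEstimate {N n : ℕ} (G : Set (Fin (N + 2) → Fin n → ℝ))
    (lf : (Fin (N + 2) → Fin n → ℝ) → ℝ) (lhat : ℝ) : Prop :=
  (⨆ x ∈ G, (↑|lf x - lhat| : EReal)) =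
    ⨅ xt ∈ G, ⨆ x ∈ G, (↑|lf x - lf xt| : EReal)

section helpers

lemma dotq_nonneg {p : ℕ} {Q : Matrix (Fin p) (Fin p) ℝ} (hQ : Q.PosDef) (g : Fin p → ℝ) :
    0 ≤ (Q *ᵥ g) ⬝ᵥ g := by
  have := hQ.posSemidef.dotProduct_mulVec_nonneg g
  simpa [dotProduct_comm] using this

lemma dotq_symm {p : ℕ} {Q : Matrix (Fin p) (Fin p) ℝ} (hQ : Q.PosDef) (a b : Fin p → ℝ) :
    (Q *ᵥ a) ⬝ᵥ b = (Q *ᵥ b) ⬝ᵥ a := by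
  have h : Qᵀ = Q := hQ.1
  rw [dotProduct_comm, dotProduct_mulVec, ← mulVec_transpose, h]

lemma transp_dot {a b : ℕ} (A : Matrix (Fin a) (Fin b) ℝ) (v : Fin a → ℝ) (w : Fin b → ℝ) :
    (Aᵀ *ᵥ v) ⬝ᵥ w = v ⬝ᵥ (A *ᵥ w) := by
  rw [mulVec_transpose, ← dotProduct_mulVec]

/-- Cauchy–Schwarz for a positive definite quadratic form. -/
lemma dot_le_sqrt {p : ℕ} {Q : Matrix (Fin p) (Fin p) ℝ} (hQ : Q.PosDef)
    (v g : Fin p → ℝ) {c : ℝ} (hg : (Q *ᵥ g) ⬝ᵥ g ≤ c) :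
    v ⬝ᵥ g ≤ Real.sqrt (((Q⁻¹ *ᵥ v) ⬝ᵥ v) * c) := by
  have hQw : Q *ᵥ (Q⁻¹ *ᵥ v) = v := by
    rw [mulVec_mulVec, Matrix.mul_nonsing_inv _ (isUnit_iff_ne_zero.mpr hQ.det_pos.ne'),
      one_mulVec]
  have ha : ((Q⁻¹ *ᵥ v) ⬝ᵥ v) = (Q *ᵥ (Q⁻¹ *ᵥ v)) ⬝ᵥ (Q⁻¹ *ᵥ v) := by
    rw [hQw, dotProduct_comm]
  have ha0 : 0 ≤ (Q⁻¹ *ᵥ v) ⬝ᵥ v := ha ▸ dotq_nonneg hQ _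
  have hc0 : 0 ≤ c := le_trans (dotq_nonneg hQ g) hg
  have key : ∀ t : ℝ, 0 ≤ ((Q⁻¹ *ᵥ v) ⬝ᵥ v) * (t*t) + (2 * (v ⬝ᵥ g)) * t
      + (Q *ᵥ g) ⬝ᵥ g := by
    intro t
    have h0 : 0 ≤ (Q *ᵥ (g + t • (Q⁻¹ *ᵥ v))) ⬝ᵥ (g + t • (Q⁻¹ *ᵥ v)) := dotq_nonneg hQ _
    have hsym : (Q *ᵥ g) ⬝ᵥ (Q⁻¹ *ᵥ v) = v ⬝ᵥ g := by
      rw [dotq_symm hQ g (Q⁻¹ *ᵥ v), hQw]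
    have hexp : (Q *ᵥ (g + t • (Q⁻¹ *ᵥ v))) ⬝ᵥ (g + t • (Q⁻¹ *ᵥ v))
        = ((Q⁻¹ *ᵥ v) ⬝ᵥ v) * (t*t) + (2 * (v ⬝ᵥ g)) * t + (Q *ᵥ g) ⬝ᵥ g := by
      simp only [mulVec_add, mulVec_smul, add_dotProduct, dotProduct_add,
        smul_dotProduct, dotProduct_smul, smul_eq_mul]
      rw [hsym, hQw, ha, hQw, dotProduct_comm v g]
      ring
    linarith
  have hd : discrim ((Q⁻¹ *ᵥ v) ⬝ᵥ v) (2 * (v ⬝ᵥ g)) ((Q *ᵥ g) ⬝ᵥ g) ≤ 0 :=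
    discrim_le_zero key
  rw [discrim] at hd
  have hsq : (v ⬝ᵥ g)^2 ≤ ((Q⁻¹ *ᵥ v) ⬝ᵥ v) * c := by
    nlinarith [mul_le_mul_of_nonneg_left hg ha0]
  calc v ⬝ᵥ g ≤ |v ⬝ᵥ g| := le_abs_self _
    _ = Real.sqrt ((v ⬝ᵥ g)^2) := (Real.sqrt_sq_eq_abs _).symm
    _ ≤ Real.sqrt (((Q⁻¹ *ᵥ v) ⬝ᵥ v) * c) := Real.sqrt_le_sqrt hsq

end helpers

section main

variable {N m n p q : ℕ}
    {F : Fin (N + 2) → Matrix (Fin m) (Fin n) ℝ}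
    {C : Fin (N + 1) → Matrix (Fin m) (Fin n) ℝ}
    {H : Fin (N + 1) → Matrix (Fin q) (Fin n) ℝ}
    {B : Fin (N + 2) → Matrix (Fin m) (Fin p) ℝ}
    {Q : Fin (N + 2) → Matrix (Fin p) (Fin p) ℝ}
    {R : Fin (N + 1) → Matrix (Fin q) (Fin q) ℝ}

lemma J0_eq (f : Fin (N + 2) → Fin p → ℝ) (x : Fin (N + 2) → Fin n → ℝ) :
    Jfun H Q R (fun _ => 0) f x =
      (∑ j : Fin (N + 2), (Q j *ᵥ f j) ⬝ᵥ f j) +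
        ∑ k : Fin (N + 1),
          (R k *ᵥ (H k *ᵥ x k.castSucc)) ⬝ᵥ (H k *ᵥ x k.castSucc) := by
  simp [Jfun, zero_sub, mulVec_neg, neg_dotProduct, dotProduct_neg, neg_neg]

lemma J0_nonneg (hQ : ∀ j, (Q j).PosDef) (hR : ∀ k, (R k).PosDef)
    (f : Fin (N + 2) → Fin p → ℝ) (x : Fin (N + 2) → Fin n → ℝ) :
    0 ≤ Jfun H Q R (fun _ => 0) f x := by
  rw [J0_eq]
  refine add_nonneg (Finset.sum_nonneg fun j _ => dotq_nonneg (hQ j) _)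
    (Finset.sum_nonneg fun k _ => dotq_nonneg (hR k) _)

lemma NSet_comb (x1 : Fin (N + 2) → Fin n → ℝ) (f1 : Fin (N + 2) → Fin p → ℝ)
    (x2 : Fin (N + 2) → Fin n → ℝ) (f2 : Fin (N + 2) → Fin p → ℝ) (s t : ℝ)
    (h1 : (x1, f1) ∈ NSet F C B) (h2 : (x2, f2) ∈ NSet F C B) :
    (s • x1 + t • x2, s • f1 + t • f2) ∈ NSet F C B := by
  obtain ⟨h1a, h1b⟩ := h1
  obtain ⟨h2a, h2b⟩ := h2
  constructor
  · intro k
    simp only [Pi.add_apply, Pi.smul_apply, mulVec_add, mulVec_smul]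
    rw [← h1a k, ← h2a k]
    module
  · simp only [Pi.add_apply, Pi.smul_apply, mulVec_add, mulVec_smul]
    rw [h1b, h2b]

lemma Jfun_expand (hQ : ∀ j, (Q j).PosDef) (hR : ∀ k, (R k).PosDef)
    (y : Fin (N + 1) → Fin q → ℝ)
    (fh : Fin (N + 2) → Fin p → ℝ) (xh : Fin (N + 2) → Fin n → ℝ)
    (g : Fin (N + 2) → Fin p → ℝ) (w : Fin (N + 2) → Fin n → ℝ) (t : ℝ) :
    Jfun H Q R y (fh + t • g) (xh + t • w) =
      Jfun H Q R y fh xh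
        + t * (2 * (∑ j : Fin (N + 2), (Q j *ᵥ fh j) ⬝ᵥ g j)
            - 2 * (∑ k : Fin (N + 1),
              (R k *ᵥ (y k - H k *ᵥ xh k.castSucc)) ⬝ᵥ (H k *ᵥ w k.castSucc)))
        + t ^ 2 * Jfun H Q R (fun _ => 0) g w := by
  have hQt : ∀ j : Fin (N + 2),
      (Q j *ᵥ (fh j + t • g j)) ⬝ᵥ (fh j + t • g j)
        = (Q j *ᵥ fh j) ⬝ᵥ fh j + (2 * t) * ((Q j *ᵥ fh j) ⬝ᵥ g j)
          + t ^ 2 * ((Q j *ᵥ g j) ⬝ᵥ g j) := by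
    intro j
    simp only [mulVec_add, mulVec_smul, add_dotProduct, dotProduct_add,
      smul_dotProduct, dotProduct_smul, smul_eq_mul]
    rw [dotq_symm (hQ j) (g j) (fh j)]
    ring
  have hRt : ∀ k : Fin (N + 1),
      (R k *ᵥ (y k - H k *ᵥ (xh k.castSucc + t • w k.castSucc))) ⬝ᵥ
          (y k - H k *ᵥ (xh k.castSucc + t • w k.castSucc))
        = (R k *ᵥ (y k - H k *ᵥ xh k.castSucc)) ⬝ᵥ (y k - H k *ᵥ xh k.castSucc)
          - (2 * t) * ((R k *ᵥ (y k - H k *ᵥ xh k.castSucc)) ⬝ᵥ (H k *ᵥ w k.castSucc))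
          + t ^ 2 * ((R k *ᵥ (H k *ᵥ w k.castSucc)) ⬝ᵥ (H k *ᵥ w k.castSucc)) := by
    intro k
    have : y k - H k *ᵥ (xh k.castSucc + t • w k.castSucc)
        = (y k - H k *ᵥ xh k.castSucc) - t • (H k *ᵥ w k.castSucc) := by
      rw [mulVec_add, mulVec_smul]; abel
    rw [this]
    simp only [mulVec_sub, mulVec_smul, sub_dotProduct, dotProduct_sub,
      smul_dotProduct, dotProduct_smul, smul_eq_mul]
    rw [dotq_symm (hR k) (H k *ᵥ w k.castSucc) (y k),
      dotq_symm (hR k) (H k *ᵥ w k.castSucc) (H k *ᵥ xh k.castSucc),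
      dotq_symm (hR k) (H k *ᵥ xh k.castSucc) (y k)]
    ring
  simp only [Jfun, Pi.add_apply, Pi.smul_apply]
  rw [Finset.sum_congr rfl (fun j _ => hQt j), Finset.sum_congr rfl (fun k _ => hRt k)]
  simp only [Finset.sum_add_distrib, Finset.sum_sub_distrib, ← Finset.mul_sum,
    zero_sub, mulVec_neg, neg_dotProduct, dotProduct_neg, neg_neg]
  ring

end main

section abelmain

variable {N m n p q : ℕ}
    {F : Fin (N + 2) → Matrix (Fin m) (Fin n) ℝ}
    {C : Fin (N + 1) → Matrix (Fin m) (Fin n) ℝ}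
    {H : Fin (N + 1) → Matrix (Fin q) (Fin n) ℝ}
    {B : Fin (N + 2) → Matrix (Fin m) (Fin p) ℝ}

lemma abel_id (z : Fin (N + 2) → Fin m → ℝ) (u : Fin (N + 1) → Fin q → ℝ)
    (l : Fin (N + 2) → Fin n → ℝ)
    (hzu : ∀ k : Fin (N + 1),
      l k.castSucc =
        (F k.castSucc)ᵀ *ᵥ z k.castSucc - (C k)ᵀ *ᵥ z k.succ + (H k)ᵀ *ᵥ u k)
    (hzl : (F (Fin.last (N + 1)))ᵀ *ᵥ z (Fin.last (N + 1)) = l (Fin.last (N + 1)))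
    (x : Fin (N + 2) → Fin n → ℝ) (f : Fin (N + 2) → Fin p → ℝ)
    (hxf : (x, f) ∈ NSet F C B) :
    lfun l x = (∑ j : Fin (N + 2), z j ⬝ᵥ (B j *ᵥ f j))
      + ∑ k : Fin (N + 1), u k ⬝ᵥ (H k *ᵥ x k.castSucc) := by
  obtain ⟨hc1, hc2⟩ := hxf
  have h1 : lfun l x
      = (∑ k : Fin (N + 1), (z k.castSucc ⬝ᵥ (F k.castSucc *ᵥ x k.castSucc)
          - z k.succ ⬝ᵥ (C k *ᵥ x k.castSucc)
          + u k ⬝ᵥ (H k *ᵥ x k.castSucc)))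
        + z (Fin.last (N + 1)) ⬝ᵥ (F (Fin.last (N + 1)) *ᵥ x (Fin.last (N + 1))) := by
    simp only [lfun]
    rw [Fin.sum_univ_castSucc (f := fun j => l j ⬝ᵥ x j)]
    congr 1
    · refine Finset.sum_congr rfl fun k _ => ?_
      rw [hzu k]
      simp [sub_dotProduct, add_dotProduct, transp_dot]
    · rw [← hzl, transp_dot]
  rw [h1, Finset.sum_add_distrib, Finset.sum_sub_distrib]
  have key : (∑ k : Fin (N + 1), z k.castSucc ⬝ᵥ (F k.castSucc *ᵥ x k.castSucc))
      + z (Fin.last (N + 1)) ⬝ᵥ (F (Fin.last (N + 1)) *ᵥ x (Fin.last (N + 1)))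
      - (∑ k : Fin (N + 1), z k.succ ⬝ᵥ (C k *ᵥ x k.castSucc))
      = ∑ j : Fin (N + 2), z j ⬝ᵥ (B j *ᵥ f j) := by
    rw [← Fin.sum_univ_castSucc (f := fun j => z j ⬝ᵥ (F j *ᵥ x j))]
    rw [Fin.sum_univ_succ (f := fun j => z j ⬝ᵥ (F j *ᵥ x j)),
      Fin.sum_univ_succ (f := fun j => z j ⬝ᵥ (B j *ᵥ f j))]
    rw [hc2, add_sub_assoc, ← Finset.sum_sub_distrib]
    congr 1
    refine Finset.sum_congr rfl fun k _ => ?_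
    rw [← dotProduct_sub, hc1 k]
  linarith [key]

end abelmain

set_option maxHeartbeats 2000000 in
/-- if `({x̂_k},{f̂_k}) ∈ 𝒩` minimizes `J_y` over `𝒩` with
`Ĵ ≤ 1` and `{ℓ_k} ∈ L`, then the support function of `G_y` satisfies
`sup_{x ∈ G_y} ℓ(x) = Σ (ℓ_k, x̂_k) + sup{ℓ(x) : ({x},{f}) ∈ 𝒩, J_0 ≤ 1 - Ĵ}`. -/
theorem stmt10 {N m n p q : ℕ}
    (F : Fin (N + 2) → Matrix (Fin m) (Fin n) ℝ)
    (C : Fin (N + 1) → Matrix (Fin m) (Fin n) ℝ)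
    (H : Fin (N + 1) → Matrix (Fin q) (Fin n) ℝ)
    (B : Fin (N + 2) → Matrix (Fin m) (Fin p) ℝ)
    (Q : Fin (N + 2) → Matrix (Fin p) (Fin p) ℝ)
    (R : Fin (N + 1) → Matrix (Fin q) (Fin q) ℝ)
    (y : Fin (N + 1) → Fin q → ℝ)
    (hQ : ∀ j, (Q j).PosDef) (hR : ∀ k, (R k).PosDef)
    (xh : Fin (N + 2) → Fin n → ℝ) (fh : Fin (N + 2) → Fin p → ℝ)
    (hmem : (xh, fh) ∈ NSet F C B)
    (hmin : ∀ xf ∈ NSet F C B, Jfun H Q R y fh xh ≤ Jfun H Q R y xf.2 xf.1)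
    (hJle : Jfun H Q R y fh xh ≤ 1)
    (l : Fin (N + 2) → Fin n → ℝ) (hl : memL F C H l) :
    sSup (lfun l '' GSet F C H B Q R y) =
      (∑ k : Fin (N + 2), l k ⬝ᵥ xh k) +
        sSup {r | ∃ xf, xf ∈ NSet F C B ∧
          Jfun H Q R (fun _ => 0) xf.2 xf.1 ≤ 1 - Jfun H Q R y fh xh ∧
          r = lfun l xf.1} := by
  obtain ⟨z, u, hzu, hzl⟩ := hl
  set c : ℝ := 1 - Jfun H Q R y fh xh with hc
  have hc0 : 0 ≤ c := by rw [hc]; linarith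
  -- cross term vanishes at the minimizer
  have hCr : ∀ (w : Fin (N + 2) → Fin n → ℝ) (g : Fin (N + 2) → Fin p → ℝ),
      (w, g) ∈ NSet F C B →
      (2 * (∑ j : Fin (N + 2), (Q j *ᵥ fh j) ⬝ᵥ g j)
        - 2 * (∑ k : Fin (N + 1),
          (R k *ᵥ (y k - H k *ᵥ xh k.castSucc)) ⬝ᵥ (H k *ᵥ w k.castSucc))) = 0 := by
    intro w g hwg
    set b := (2 * (∑ j : Fin (N + 2), (Q j *ᵥ fh j) ⬝ᵥ g j)
        - 2 * (∑ k : Fin (N + 1),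
          (R k *ᵥ (y k - H k *ᵥ xh k.castSucc)) ⬝ᵥ (H k *ᵥ w k.castSucc))) with hb
    have ha0 : 0 ≤ Jfun H Q R (fun _ => 0) g w := J0_nonneg hQ hR g w
    have key : ∀ t : ℝ, 0 ≤ Jfun H Q R (fun _ => 0) g w * (t * t) + b * t + 0 := by
      intro t
      have hmem' : (xh + t • w, fh + t • g) ∈ NSet F C B := by
        have := NSet_comb xh fh w g 1 t hmem hwg
        simpa using this
      have hle : Jfun H Q R y fh xh ≤ Jfun H Q R y (fh + t • g) (xh + t • w) :=
        hmin (xh + t • w, fh + t • g) hmem'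
      have hexp := Jfun_expand (H := H) hQ hR y fh xh g w t
      rw [hexp, ← hb] at hle
      nlinarith [hle]
    have hd := discrim_le_zero key
    rw [discrim] at hd
    have hb2 : b ^ 2 ≤ 0 := by nlinarith
    exact sq_eq_zero_iff.mp (le_antisymm hb2 (sq_nonneg b))
  -- Pythagoras identity
  have hPy : ∀ (x : Fin (N + 2) → Fin n → ℝ) (f : Fin (N + 2) → Fin p → ℝ),
      (x, f) ∈ NSet F C B →
      Jfun H Q R y f x =
        Jfun H Q R y fh xh + Jfun H Q R (fun _ => 0) (f - fh) (x - xh) := by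
    intro x f hxf
    have hd : (x - xh, f - fh) ∈ NSet F C B := by
      have := NSet_comb x f xh fh 1 (-1) hxf hmem
      simpa [sub_eq_add_neg] using this
    have hexp := Jfun_expand (H := H) hQ hR y fh xh (f - fh) (x - xh) 1
    rw [hCr _ _ hd] at hexp
    simpa using hexp
  -- uniform bound on the RHS set
  set M : ℝ :=
      (∑ j : Fin (N + 2),
        Real.sqrt ((((Q j)⁻¹ *ᵥ ((B j)ᵀ *ᵥ z j)) ⬝ᵥ ((B j)ᵀ *ᵥ z j)) * c))
      + ∑ k : Fin (N + 1), Real.sqrt ((((R k)⁻¹ *ᵥ u k) ⬝ᵥ u k) * c) with hM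
  have hbound : ∀ (x : Fin (N + 2) → Fin n → ℝ) (f : Fin (N + 2) → Fin p → ℝ),
      (x, f) ∈ NSet F C B → Jfun H Q R (fun _ => 0) f x ≤ c → lfun l x ≤ M := by
    intro x f hxf hJ0
    rw [abel_id z u l hzu hzl x f hxf, hM]
    rw [J0_eq] at hJ0
    have hQsum : 0 ≤ ∑ j : Fin (N + 2), (Q j *ᵥ f j) ⬝ᵥ f j :=
      Finset.sum_nonneg fun j _ => dotq_nonneg (hQ j) _
    have hRsum : 0 ≤ ∑ k : Fin (N + 1),
        (R k *ᵥ (H k *ᵥ x k.castSucc)) ⬝ᵥ (H k *ᵥ x k.castSucc) :=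
      Finset.sum_nonneg fun k _ => dotq_nonneg (hR k) _
    have hterms : ∀ j : Fin (N + 2), (Q j *ᵥ f j) ⬝ᵥ f j ≤ c := by
      intro j
      have h1 : (Q j *ᵥ f j) ⬝ᵥ f j ≤ ∑ j' : Fin (N + 2), (Q j' *ᵥ f j') ⬝ᵥ f j' :=
        Finset.single_le_sum (fun i _ => dotq_nonneg (hQ i) (f i)) (Finset.mem_univ j)
      linarith
    have hterms2 : ∀ k : Fin (N + 1),
        (R k *ᵥ (H k *ᵥ x k.castSucc)) ⬝ᵥ (H k *ᵥ x k.castSucc) ≤ c := by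
      intro k
      have h1 : (R k *ᵥ (H k *ᵥ x k.castSucc)) ⬝ᵥ (H k *ᵥ x k.castSucc)
          ≤ ∑ k' : Fin (N + 1),
            (R k' *ᵥ (H k' *ᵥ x k'.castSucc)) ⬝ᵥ (H k' *ᵥ x k'.castSucc) :=
        Finset.single_le_sum
          (f := fun k' : Fin (N + 1) =>
            (R k' *ᵥ (H k' *ᵥ x k'.castSucc)) ⬝ᵥ (H k' *ᵥ x k'.castSucc))
          (fun i _ => dotq_nonneg (hR i) _) (Finset.mem_univ k)
      linarith
    refine add_le_add (Finset.sum_le_sum fun j _ => ?_)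
      (Finset.sum_le_sum fun k _ => ?_)
    · rw [← transp_dot]
      exact dot_le_sqrt (hQ j) _ _ (hterms j)
    · exact dot_le_sqrt (hR k) _ _ (hterms2 k)
  set S := {r | ∃ xf, xf ∈ NSet F C B ∧
      Jfun H Q R (fun _ => 0) xf.2 xf.1 ≤ c ∧ r = lfun l xf.1} with hSdef
  have hSne : S.Nonempty := by
    refine ⟨0, ⟨(0, 0), ⟨fun k => by simp, by simp⟩, ?_, by simp [lfun]⟩⟩
    rw [J0_eq]
    simpa using hc0
  have hSbdd : BddAbove S := by
    refine ⟨M, ?_⟩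
    rintro r ⟨⟨x, f⟩, hxf, hJ, rfl⟩
    exact hbound x f hxf hJ
  have hlub : IsLUB S (sSup S) := isLUB_csSup hSne hSbdd
  have himg : lfun l '' GSet F C H B Q R y = (fun r => lfun l xh + r) '' S := by
    ext v
    constructor
    · rintro ⟨x, ⟨f, hxf, hJy⟩, rfl⟩
      have hd : (x - xh, f - fh) ∈ NSet F C B := by
        have := NSet_comb x f xh fh 1 (-1) hxf hmem
        simpa [sub_eq_add_neg] using this
      have hp := hPy x f hxf
      refine ⟨lfun l (x - xh), ⟨(x - xh, f - fh), hd, ?_, rfl⟩, ?_⟩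
      · show Jfun H Q R (fun _ => 0) (f - fh) (x - xh) ≤ c
        rw [hc]; linarith
      · show lfun l xh + lfun l (x - xh) = lfun l x
        simp only [lfun, Pi.sub_apply, dotProduct_sub, Finset.sum_sub_distrib]
        ring
    · rintro ⟨r, ⟨⟨w, g⟩, hwg, hJ0, rfl⟩, rfl⟩
      have hJ0' : Jfun H Q R (fun _ => 0) g w ≤ c := hJ0
      have hmem2 : (xh + w, fh + g) ∈ NSet F C B := by
        have := NSet_comb xh fh w g 1 1 hmem hwg
        simpa using this
      have hp := hPy (xh + w) (fh + g) hmem2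
      rw [add_sub_cancel_left, add_sub_cancel_left] at hp
      refine ⟨xh + w, ⟨fh + g, hmem2, by rw [hp, hc] at *; linarith⟩, ?_⟩
      show lfun l (xh + w) = lfun l xh + lfun l w
      simp only [lfun, Pi.add_apply, dotProduct_add, Finset.sum_add_distrib]
  rw [himg]
  have h2 : IsLUB ((fun r => lfun l xh + r) '' S) (lfun l xh + sSup S) := by
    constructor
    · rintro v ⟨r, hr, rfl⟩
      exact add_le_add_right (hlub.1 hr) _
    · intro b hb
      have h3 : sSup S ≤ b - lfun l xh := by
        refine hlub.2 fun r hr => ?_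
        have h4 : lfun l xh + r ≤ b := hb ⟨r, hr, rfl⟩
        linarith
      linarith
  rw [h2.csSup_eq (hSne.image _)]
  rfl
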